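/- arXiv:1303.6710 — 4 statements merged into one kernel-verified Lean document; each statement's English description precedes it below -/
import Mathlib

section
/- There exists a vector Z with all entries strictly positive such that all entries of AZ are strictly negative. -/
/-- Let `A` be a `p × p` real symmetric matrix with `1`s on the diagonal, nonpositive
off-diagonal entries, indecomposable, and with at least one strictly negative eigenvalue.
Then there exists a vector `Z` with all entries strictly positive such that all entries of
`A.mulVec Z` are strictly negative. -/
theorem stmt_0 (p : ℕ) (hp : 1 ≤ p) (A : Matrix (Fin p) (Fin p) ℝ)
    (hsymm : A.IsSymm)
    (hdiag : ∀ i, A i i = 1)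
    (hoff : ∀ i j, i ≠ j → A i j ≤ 0)
    (hindec : ∀ I : Set (Fin p), I.Nonempty → Iᶜ.Nonempty →
      ∃ i ∈ I, ∃ j ∈ Iᶜ, A i j ≠ 0)
    (hneg : ∃ μ : ℝ, μ < 0 ∧ ∃ v : Fin p → ℝ, v ≠ 0 ∧ A.mulVec v = μ • v) :
    ∃ Z : Fin p → ℝ, (∀ i, 0 < Z i) ∧ ∀ i, A.mulVec Z i < 0 := by
  obtain ⟨μ, hμ, v, hv, heig⟩ := hneg
  set w : Fin p → ℝ := fun i => |v i| with hwdef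
  have hw0 : ∀ i, 0 ≤ w i := fun i => abs_nonneg _
  -- Key entrywise inequality: (A w) i ≤ μ * w i
  have key : ∀ i, A.mulVec w i ≤ μ * w i := by
    intro i
    have h1 : ∑ j, A i j * v j = μ * v i := by
      have := congrFun heig i
      simpa [Matrix.mulVec, dotProduct, smul_eq_mul] using this
    have h2 : ∑ j, A i j * v j = A i i * v i + ∑ j ∈ Finset.univ.erase i, A i j * v j :=
      (Finset.add_sum_erase _ _ (Finset.mem_univ i)).symm
    rw [hdiag i, one_mul] at h2
    have heq : ∑ j ∈ Finset.univ.erase i, A i j * v j = (μ - 1) * v i := by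
      rw [h2] at h1; linarith
    have hstep : ∑ j ∈ Finset.univ.erase i, A i j * w j ≤ (μ - 1) * w i := by
      have e1 : ∑ j ∈ Finset.univ.erase i, A i j * w j
          = -∑ j ∈ Finset.univ.erase i, |A i j * v j| := by
        rw [← Finset.sum_neg_distrib]
        apply Finset.sum_congr rfl
        intro j hj
        have hji : j ≠ i := Finset.ne_of_mem_erase hj
        have hij : A i j ≤ 0 := hoff i j (Ne.symm hji)
        rw [abs_mul, abs_of_nonpos hij]
        simp [hwdef]
      have e2 : |∑ j ∈ Finset.univ.erase i, A i j * v j|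
          ≤ ∑ j ∈ Finset.univ.erase i, |A i j * v j| :=
        Finset.abs_sum_le_sum_abs _ _
      have e3 : |∑ j ∈ Finset.univ.erase i, A i j * v j| = (1 - μ) * w i := by
        rw [heq, abs_mul, abs_of_neg (by linarith : μ - 1 < 0)]
        simp [hwdef]
      rw [e1]
      linarith
    have hmv : A.mulVec w i = A i i * w i + ∑ j ∈ Finset.univ.erase i, A i j * w j := by
      simp only [Matrix.mulVec, dotProduct]
      exact (Finset.add_sum_erase _ _ (Finset.mem_univ i)).symm
    rw [hmv, hdiag i, one_mul]
    linarith
  -- The nonnegative matrix B = 2•1 - A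
  set B : Matrix (Fin p) (Fin p) ℝ := (2 : ℝ) • (1 : Matrix (Fin p) (Fin p) ℝ) - A with hBdef
  have hBentry : ∀ i j, B i j = (if i = j then 2 else 0) - A i j := by
    intro i j
    simp [hBdef, Matrix.one_apply, Matrix.sub_apply, Matrix.smul_apply, mul_ite]
  have hBnn : ∀ i j, 0 ≤ B i j := by
    intro i j
    rw [hBentry]
    by_cases h : i = j
    · subst h; simp [hdiag i]
    · simp [h]; linarith [hoff i j h]
  have hBdiag : ∀ i, B i i = 1 := by
    intro i; rw [hBentry]; simp [hdiag i]; norm_num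
  have hcomm : Commute A B := by
    have : Commute A ((2 : ℝ) • (1 : Matrix (Fin p) (Fin p) ℝ)) :=
      (Commute.one_right A).smul_right 2
    exact this.sub_right (Commute.refl A)
  have hBpownn : ∀ k, ∀ i j, 0 ≤ (B ^ k) i j := by
    intro k
    induction k with
    | zero => intro i j; simp [Matrix.one_apply]; positivity
    | succ n ih =>
        intro i j
        rw [pow_succ, Matrix.mul_apply]
        exact Finset.sum_nonneg fun l _ => mul_nonneg (ih i l) (hBnn l j)
  set W : ℕ → (Fin p → ℝ) := fun k => (B ^ k).mulVec w with hWdef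
  have hW0 : W 0 = w := by simp [hWdef]
  have hWsucc : ∀ k, W (k + 1) = B.mulVec (W k) := by
    intro k
    simp only [hWdef, pow_succ']
    rw [← Matrix.mulVec_mulVec]
  have hWnn : ∀ k i, 0 ≤ W k i := by
    intro k i
    simp only [hWdef, Matrix.mulVec, dotProduct]
    exact Finset.sum_nonneg fun j _ => mul_nonneg (hBpownn k i j) (hw0 j)
  -- support growth
  set S : ℕ → Finset (Fin p) := fun k => Finset.univ.filter (fun i => 0 < W k i) with hSdef
  have hmemS : ∀ k i, i ∈ S k ↔ 0 < W k i := by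
    intro k i; simp [hSdef]
  have hmono : ∀ k, S k ⊆ S (k + 1) := by
    intro k i hi
    rw [hmemS] at hi ⊢
    rw [hWsucc]
    have : B i i * W k i ≤ ∑ j, B i j * W k j :=
      Finset.single_le_sum (fun j _ => mul_nonneg (hBnn i j) (hWnn k j)) (Finset.mem_univ i)
    rw [hBdiag i, one_mul] at this
    calc (0:ℝ) < W k i := hi
      _ ≤ _ := this
  have hcard : ∀ k, min (k + 1) p ≤ (S k).card := by
    intro k
    induction k with
    | zero =>
        obtain ⟨i, hi⟩ := Function.ne_iff.mp hv
        have : i ∈ S 0 := by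
          rw [hmemS, hW0]
          exact abs_pos.mpr hi
        calc min 1 p = 1 := by omega
          _ ≤ (S 0).card := Finset.card_pos.mpr ⟨i, this⟩
    | succ n ih =>
        by_cases huniv : S n = Finset.univ
        · have : S (n + 1) = Finset.univ :=
            Finset.eq_univ_of_forall fun i => hmono n (huniv ▸ Finset.mem_univ i)
          rw [this, Finset.card_univ, Fintype.card_fin]
          omega
        · -- complement nonempty, S n nonempty
          have hSn_ne : (S n).Nonempty := by
            rw [← Finset.card_pos]; omega
          have hIne : ((↑(S n) : Set (Fin p))ᶜ).Nonempty := by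
            have : ∃ i, i ∉ S n := by
              by_contra h
              push_neg at h
              exact huniv (Finset.eq_univ_iff_forall.mpr h)
            obtain ⟨i, hi⟩ := this
            exact ⟨i, by simpa using hi⟩
          have hIcne : ((↑(S n) : Set (Fin p))ᶜᶜ).Nonempty := by
            rw [compl_compl]
            exact ⟨hSn_ne.choose, by simpa using hSn_ne.choose_spec⟩
          obtain ⟨i, hiI, j, hjI, hAij⟩ := hindec _ hIne hIcne
          have hiS : i ∉ S n := by simpa using hiI
          have hjS : j ∈ S n := by
            rw [compl_compl] at hjI; simpa using hjI
          have hij : i ≠ j := fun h => hiS (h ▸ hjS)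
          have hBij : 0 < B i j := by
            rcases lt_or_eq_of_le (hBnn i j) with h | h
            · exact h
            · exfalso
              apply hAij
              have := hBentry i j
              rw [← h] at this
              simp [hij] at this
              linarith
          have hiS1 : i ∈ S (n + 1) := by
            rw [hmemS, hWsucc]
            have h1 : B i j * W n j ≤ ∑ l, B i l * W n l :=
              Finset.single_le_sum (fun l _ => mul_nonneg (hBnn i l) (hWnn n l))
                (Finset.mem_univ j)
            have h2 : 0 < B i j * W n j := mul_pos hBij ((hmemS n j).mp hjS)
            calc (0:ℝ) < B i j * W n j := h2
              _ ≤ _ := h1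
          have hsub : insert i (S n) ⊆ S (n + 1) := by
            intro x hx
            rcases Finset.mem_insert.mp hx with h | h
            · exact h ▸ hiS1
            · exact hmono n h
          have : (S n).card + 1 ≤ (S (n + 1)).card := by
            calc (S n).card + 1 = (insert i (S n)).card :=
                  (Finset.card_insert_of_notMem hiS).symm
              _ ≤ (S (n + 1)).card := Finset.card_le_card hsub
          have hle : (S n).card ≤ p := by
            have := Finset.card_le_univ (S n)
            simpa using this
          omega
  -- Z = W (p - 1) is positive everywhere
  have hZpos : ∀ i, 0 < W (p - 1) i := by
    have h := hcard (p - 1)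
    have hm : min (p - 1 + 1) p = p := by omega
    rw [hm] at h
    have hub : (S (p - 1)).card ≤ p := by
      have := Finset.card_le_univ (S (p - 1))
      simpa using this
    have hcard' : (S (p - 1)).card = p := le_antisymm hub h
    have huniv : S (p - 1) = Finset.univ := Finset.eq_univ_of_card _ (by simpa using hcard')
    intro i
    rw [← hmemS, huniv]
    exact Finset.mem_univ i
  refine ⟨W (p - 1), hZpos, ?_⟩
  intro i
  have hAZ : A.mulVec (W (p - 1)) i = (B ^ (p - 1)).mulVec (A.mulVec w) i := by
    simp only [hWdef]
    rw [Matrix.mulVec_mulVec, Matrix.mulVec_mulVec, (hcomm.pow_right (p - 1)).eq]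
  rw [hAZ]
  have hle : (B ^ (p - 1)).mulVec (A.mulVec w) i ≤ (B ^ (p - 1)).mulVec (μ • w) i := by
    simp only [Matrix.mulVec, dotProduct]
    apply Finset.sum_le_sum
    intro j _
    exact mul_le_mul_of_nonneg_left (by simpa [Matrix.mulVec, dotProduct] using key j) (hBpownn (p - 1) i j)
  have hsmul : (B ^ (p - 1)).mulVec (μ • w) i = μ * W (p - 1) i := by
    rw [Matrix.mulVec_smul]
    simp [hWdef]
  rw [hsmul] at hle
  exact lt_of_le_of_lt hle (mul_neg_of_neg_of_pos hμ (hZpos i))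
end

section
/- For every n ∈ ℕ, (s_α s_β)^n(α) = p_{2n+1} α + p_{2n} β and (s_β s_α)^n(β) = p_{2n} α + p_{2n+1} β, where p_m := sinh(mλ)/sinh(λ). Moreover B((s_α s_β)^n(α), (s_β s_α)^n(β)) = -cosh((4n+1)λ). -/
/-- product-to-sum identity -/
lemma sinh_sum_aux (x y : ℝ) :
    Real.sinh (x + y) + Real.sinh (x - y) = 2 * Real.sinh x * Real.cosh y := by
  rw [Real.sinh_add, Real.sinh_sub]; ring

lemma key_id (x y : ℝ) (hs : Real.sinh y ≠ 0) :
    Real.sinh x / Real.sinh y *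
        (Real.sinh (x + y) / Real.sinh y * 1 + Real.sinh x / Real.sinh y * -Real.cosh y) +
      Real.sinh (x + y) / Real.sinh y *
        (Real.sinh (x + y) / Real.sinh y * -Real.cosh y + Real.sinh x / Real.sinh y * 1) =
    -Real.cosh (2 * x + y) := by
  have h2A : Real.cosh (2 * x + y)
      = (2 * Real.cosh x ^ 2 - 1) * Real.cosh y + 2 * Real.sinh x * Real.cosh x * Real.sinh y := by
    rw [Real.cosh_add, Real.cosh_two_mul, Real.sinh_two_mul]
    linear_combination (-Real.cosh y) * Real.cosh_sq_sub_sinh_sq x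
  have hA1 : Real.cosh x ^ 2 - Real.sinh x ^ 2 = 1 := Real.cosh_sq_sub_sinh_sq x
  have hl1 : Real.cosh y ^ 2 - Real.sinh y ^ 2 = 1 := Real.cosh_sq_sub_sinh_sq y
  rw [Real.sinh_add, h2A]
  field_simp
  linear_combination (Real.cosh y * Real.sinh y ^ 2) * hA1
    - (Real.sinh x ^ 2 * Real.cosh y + 2 * Real.sinh x * Real.cosh x * Real.sinh y) * hl1

/-- Dihedral computation: with `B(α,α) = B(β,β) = 1`, `B(α,β) = -cosh l` (`l > 0`),
reflections `s_ρ(v) = v - 2B(ρ,v)ρ`, and `p m = sinh(m·l)/sinh l`, one has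
`(s_α s_β)^n(α) = p_{2n+1} α + p_{2n} β`, `(s_β s_α)^n(β) = p_{2n} α + p_{2n+1} β`,
and `B((s_α s_β)^n(α), (s_β s_α)^n(β)) = -cosh((4n+1)l)`. -/
theorem stmt_8 (V : Type*) [AddCommGroup V] [Module ℝ V]
    (B : LinearMap.BilinForm ℝ V) (hsymm : ∀ a b : V, B a b = B b a)
    (α β : V) (l : ℝ) (hl : 0 < l)
    (hα : B α α = 1) (hβ : B β β = 1) (hαβ : B α β = -Real.cosh l)
    (sα sβ : V → V)
    (hsα : ∀ v, sα v = v - (2 * B α v) • α)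
    (hsβ : ∀ v, sβ v = v - (2 * B β v) • β)
    (p : ℕ → ℝ) (hp : ∀ m : ℕ, p m = Real.sinh ((m : ℝ) * l) / Real.sinh l)
    (n : ℕ) :
    (sα ∘ sβ)^[n] α = p (2 * n + 1) • α + p (2 * n) • β ∧
    (sβ ∘ sα)^[n] β = p (2 * n) • α + p (2 * n + 1) • β ∧
    B ((sα ∘ sβ)^[n] α) ((sβ ∘ sα)^[n] β) = -Real.cosh ((4 * (n : ℝ) + 1) * l) := by
  have hsl : (0:ℝ) < Real.sinh l := by
    rw [← Real.sinh_zero]; exact Real.sinh_lt_sinh.mpr hl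
  have hs : Real.sinh l ≠ 0 := ne_of_gt hsl
  have hβα : B β α = -Real.cosh l := (hsymm β α).trans hαβ
  have hp0 : p 0 = 0 := by rw [hp]; simp
  have hp1 : p 1 = 1 := by rw [hp]; simp [div_self hs]
  -- recurrence
  have hrec : ∀ m : ℕ, p (m + 2) = 2 * Real.cosh l * p (m + 1) - p m := by
    intro m
    rw [hp, hp, hp]
    field_simp
    have h := sinh_sum_aux (((m : ℝ) + 1) * l) l
    have e1 : ((m : ℝ) + 1) * l + l = ((m : ℝ) + 2) * l := by ring
    have e2 : ((m : ℝ) + 1) * l - l = (m : ℝ) * l := by ring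
    rw [e1, e2] at h
    push_cast at *
    ring_nf at h ⊢
    linarith
  -- the two vector formulas by induction
  have key : ∀ k : ℕ, (sα ∘ sβ)^[k] α = p (2 * k + 1) • α + p (2 * k) • β ∧
      (sβ ∘ sα)^[k] β = p (2 * k) • α + p (2 * k + 1) • β := by
    intro k
    induction k with
    | zero => simp [hp0, hp1]
    | succ k ih =>
      obtain ⟨ih1, ih2⟩ := ih
      have r1 : p (2 * k + 2) = 2 * Real.cosh l * p (2 * k + 1) - p (2 * k) := hrec (2 * k)
      have r2 : p (2 * k + 3) = 2 * Real.cosh l * p (2 * k + 2) - p (2 * k + 1) := by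
        have h := hrec (2 * k + 1)
        rwa [show 2 * k + 1 + 2 = 2 * k + 3 by ring, show 2 * k + 1 + 1 = 2 * k + 2 by ring] at h
      constructor
      · rw [Function.iterate_succ_apply', Function.comp_apply, ih1, hsβ, hsα,
          show 2 * (k + 1) + 1 = 2 * k + 3 by ring, show 2 * (k + 1) = 2 * k + 2 by ring,
          r2, r1]
        simp only [map_add, map_smul, map_sub, smul_eq_mul, hα, hβ, hαβ, hβα]
        match_scalars <;> ring
      · rw [Function.iterate_succ_apply', Function.comp_apply, ih2, hsα, hsβ,
          show 2 * (k + 1) + 1 = 2 * k + 3 by ring, show 2 * (k + 1) = 2 * k + 2 by ring,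
          r2, r1]
        simp only [map_add, map_smul, map_sub, smul_eq_mul, hα, hβ, hαβ, hβα]
        match_scalars <;> ring
  obtain ⟨k1, k2⟩ := key n
  refine ⟨k1, k2, ?_⟩
  rw [k1, k2]
  simp only [map_add, map_smul, LinearMap.add_apply, LinearMap.smul_apply,
    smul_eq_mul, hα, hβ, hαβ, hβα]
  rw [hp, hp]
  push_cast
  rw [show (2 * (n : ℝ) + 1) * l = 2 * (n : ℝ) * l + l by ring,
    show (4 * (n : ℝ) + 1) * l = 2 * (2 * (n : ℝ) * l) + l by ring]
  exact key_id (2 * (n : ℝ) * l) l hs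
end

section
/- Let β_n := (s_α s_β)^n(α) = p_{2n+1}α + p_{2n}β. If γ ∈ V satisfies B(γ,α) ≤ 0 and B(γ,β) ≤ 0 with at least one inequality strict, then B(β_n, γ) ≤ B(α, γ) for all n ≥ 0, and B(β_n, γ) → -∞ as n → ∞. Also B((s_α s_β)^n(α), (s_β s_α)^n(β)) = -cosh((4n+1)λ) ≤ -cosh(λ) = B(α, β) for all n ≥ 0. -/
open Real Filter

private lemma stmt9_key (x y : ℝ) : 2 * Real.sinh x * Real.sinh y -
    (Real.sinh x ^ 2 + Real.sinh y ^ 2) * Real.cosh (x - y) =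
    -Real.cosh (x + y) * Real.sinh (x - y) ^ 2 := by
  rw [Real.cosh_add, Real.cosh_sub, Real.sinh_sub]
  have h1 := Real.cosh_sq_sub_sinh_sq x
  have h2 := Real.cosh_sq_sub_sinh_sq y
  linear_combination (Real.sinh y ^ 2 * Real.cosh x * Real.cosh y -
      2 * Real.sinh x * Real.sinh y * Real.cosh y ^ 2 +
      Real.sinh x * Real.sinh y ^ 3) * h1 +
    (Real.sinh x ^ 2 * Real.cosh x * Real.cosh y -
      2 * Real.sinh x * Real.sinh y * (Real.sinh x ^ 2 + 1) +
      Real.sinh x ^ 3 * Real.sinh y) * h2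

private lemma stmt9_sinh_tendsto : Tendsto Real.sinh atTop atTop := by
  refine tendsto_atTop_mono' atTop (f₁ := fun x => Real.exp x / 2 + (-1/2)) ?_ ?_
  · filter_upwards [eventually_ge_atTop (0:ℝ)] with x hx
    rw [Real.sinh_eq]
    nlinarith [Real.exp_le_one_iff.mpr (neg_nonpos_of_nonneg hx)]
  · exact tendsto_atTop_add_const_right _ _ (Real.tendsto_exp_atTop.atTop_div_const two_pos)

/-- With `β_n := (s_α s_β)^n(α) = p_{2n+1} α + p_{2n} β`: if `γ` satisfies
`B(γ,α) ≤ 0` and `B(γ,β) ≤ 0` with at least one inequality strict, then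
`B(β_n,γ) ≤ B(α,γ)` for all `n` and `B(β_n,γ) → -∞`. Also
`B((s_α s_β)^n(α), (s_β s_α)^n(β)) = -cosh((4n+1)l) ≤ -cosh l = B(α,β)`. -/
theorem stmt_9 (V : Type*) [AddCommGroup V] [Module ℝ V]
    (B : LinearMap.BilinForm ℝ V) (hsymm : ∀ a b : V, B a b = B b a)
    (α β : V) (l : ℝ) (hl : 0 < l)
    (hα : B α α = 1) (hβ : B β β = 1) (hαβ : B α β = -Real.cosh l)
    (p : ℕ → ℝ) (hp : ∀ m : ℕ, p m = Real.sinh ((m : ℝ) * l) / Real.sinh l)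
    (βn : ℕ → V) (hβn : ∀ n : ℕ, βn n = p (2 * n + 1) • α + p (2 * n) • β)
    (γ : V) (hγα : B γ α ≤ 0) (hγβ : B γ β ≤ 0) (hstrict : B γ α < 0 ∨ B γ β < 0) :
    (∀ n : ℕ, B (βn n) γ ≤ B α γ) ∧
    Filter.Tendsto (fun n : ℕ => B (βn n) γ) Filter.atTop Filter.atBot ∧
    (∀ n : ℕ, B (βn n) (p (2 * n) • α + p (2 * n + 1) • β) =
        -Real.cosh ((4 * (n : ℝ) + 1) * l) ∧
      -Real.cosh ((4 * (n : ℝ) + 1) * l) ≤ B α β) := by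
  have hs : 0 < Real.sinh l := Real.sinh_pos_iff.mpr hl
  have hBexp : ∀ (a b : ℝ) (v : V), B (a • α + b • β) v = a * B α v + b * B β v := by
    intro a b v
    simp [LinearMap.add_apply, LinearMap.smul_apply, smul_eq_mul]
  have hαγ : B α γ ≤ 0 := by rw [hsymm]; exact hγα
  have hβγ : B β γ ≤ 0 := by rw [hsymm]; exact hγβ
  have hp1 : ∀ n : ℕ, 1 ≤ p (2 * n + 1) := by
    intro n
    rw [hp, le_div_iff₀ hs, one_mul]
    apply Real.sinh_le_sinh.mpr
    push_cast
    nlinarith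
  have hp0 : ∀ n : ℕ, 0 ≤ p (2 * n) := by
    intro n
    rw [hp]
    exact div_nonneg (Real.sinh_nonneg_iff.mpr (by positivity)) hs.le
  have hmono : ∀ n : ℕ, p (2 * n) ≤ p (2 * n + 1) := by
    intro n
    rw [hp, hp]
    refine (div_le_div_iff_of_pos_right hs).mpr (Real.sinh_le_sinh.mpr ?_)
    push_cast
    nlinarith
  have hc : B α γ + B β γ < 0 := by
    rcases hstrict with h | h
    · rw [hsymm γ α] at h; linarith
    · rw [hsymm γ β] at h; linarith
  refine ⟨?_, ?_, ?_⟩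
  · intro n
    rw [hβn, hBexp]
    nlinarith [mul_nonneg (hp0 n) (neg_nonneg.mpr hβγ),
      mul_nonneg (sub_nonneg.mpr (hp1 n)) (neg_nonneg.mpr hαγ)]
  · have hbound : ∀ n : ℕ, B (βn n) γ ≤ p (2 * n) * (B α γ + B β γ) := by
      intro n
      rw [hβn, hBexp]
      nlinarith [mul_nonneg (sub_nonneg.mpr (hmono n)) (neg_nonneg.mpr hαγ)]
    have harg : Tendsto (fun n : ℕ => ((2 * n : ℕ) : ℝ) * l) atTop atTop := by
      have h2 : Tendsto (fun n : ℕ => (n : ℝ) * (2 * l)) atTop atTop :=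
        Tendsto.atTop_mul_const (by positivity) tendsto_natCast_atTop_atTop
      convert h2 using 2 with n
      push_cast
      ring
    have htend : Tendsto (fun n : ℕ => p (2 * n)) atTop atTop := by
      have := (stmt9_sinh_tendsto.comp harg).atTop_div_const hs
      refine this.congr fun n => ?_
      simp [Function.comp, hp]
    exact tendsto_atBot_mono hbound (htend.atTop_mul_const_of_neg hc)
  · intro n
    have hub : -Real.cosh ((4 * (n : ℝ) + 1) * l) ≤ B α β := by
      rw [hαβ, neg_le_neg_iff]
      apply Real.cosh_le_cosh.mpr
      rw [abs_of_pos hl, abs_of_pos (by positivity)]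
      nlinarith [Nat.cast_nonneg (α := ℝ) n]
    refine ⟨?_, hub⟩
    rw [hβn, hBexp]
    have hexp2 : ∀ v : V, B v (p (2 * n) • α + p (2 * n + 1) • β)
        = p (2 * n) * B v α + p (2 * n + 1) * B v β := by
      intro v
      simp [map_add, map_smul, smul_eq_mul]
    rw [hexp2, hexp2, hα, hβ, hsymm β α, hαβ, hp, hp]
    have hx : ((2 * n + 1 : ℕ) : ℝ) * l = (2 * (n : ℝ) + 1) * l := by push_cast; ring
    have hy : ((2 * n : ℕ) : ℝ) * l = (2 * (n : ℝ)) * l := by push_cast; ring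
    rw [hx, hy]
    have hkey := stmt9_key ((2 * (n : ℝ) + 1) * l) ((2 * (n : ℝ)) * l)
    rw [show (2 * (n : ℝ) + 1) * l - (2 * (n : ℝ)) * l = l by ring,
      show (2 * (n : ℝ) + 1) * l + (2 * (n : ℝ)) * l = (4 * (n : ℝ) + 1) * l by ring] at hkey
    generalize Real.cosh ((4 * (n : ℝ) + 1) * l) = c at hkey ⊢
    field_simp
    linear_combination hkey
end

section
/- φ(s_n(z)) → +∞ and s_n(z)/φ(s_n(z)) → x as n → ∞, where s_n(z) := z - 2B(z, α_n)α_n. (Indeed, for large n one has φ(s_n(z)) = 1 - 2B(z,α_n)φ(α_n) ≥ 1 + φ(α_n)ε for a suitable ε > 0, and s_n(z)/φ(s_n(z)) = z/φ(s_n(z)) + (φ(s_n(z))-1)/φ(s_n(z)) · α_n/φ(α_n).) -/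
open Filter

/-- With `α_n/φ(α_n) → x`, `B(x,x) = 0`, `φ(z) = 1` and `B(z,x) < 0`, setting
`s_n(z) := z - 2B(z,α_n)α_n`, one has `φ(s_n(z)) → +∞` and
`s_n(z)/φ(s_n(z)) → x`. -/
theorem stmt_13 (V : Type*) [NormedAddCommGroup V] [NormedSpace ℝ V]
    [FiniteDimensional ℝ V]
    (B : LinearMap.BilinForm ℝ V) (hsymm : ∀ a b : V, B a b = B b a)
    (φ : V →ₗ[ℝ] ℝ) (α : ℕ → V) (x : V)
    (hnorm : ∀ n, B (α n) (α n) = 1) (hpos : ∀ n, 0 < φ (α n))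
    (hconv : Tendsto (fun n => (φ (α n))⁻¹ • α n) atTop (nhds x))
    (hx : B x x = 0)
    (z : V) (hz : φ z = 1) (hzx : B z x < 0) :
    Tendsto (fun n => φ (z - (2 * B z (α n)) • α n)) atTop atTop ∧
    Tendsto (fun n => (φ (z - (2 * B z (α n)) • α n))⁻¹ • (z - (2 * B z (α n)) • α n))
      atTop (nhds x) := by
  set f : ℕ → ℝ := fun n => φ (α n) with hfdef
  have hfpos : ∀ n, 0 < f n := hpos
  have hfne : ∀ n, f n ≠ 0 := fun n => (hfpos n).ne'
  set c : ℕ → ℝ := fun n => B z (α n) with hcdef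
  -- continuity facts
  have hBcont : Continuous fun p : V × V => B p.1 p.2 := by
    let Bc : V →ₗ[ℝ] (V →L[ℝ] ℝ) :=
      { toFun := fun v => LinearMap.toContinuousLinearMap (B v)
        map_add' := by intro a b; ext v; simp
        map_smul' := by intro r a; ext v; simp }
    have h1 : Continuous Bc := Bc.continuous_of_finiteDimensional
    exact isBoundedBilinearMap_apply.continuous.comp
      ((h1.comp continuous_fst).prodMk continuous_snd)
  -- step 1 : f n * f n → atTop
  have h1 : Tendsto (fun n => ((f n) * (f n))⁻¹) atTop (nhds 0) := by
    have h := (hBcont.tendsto (x, x)).comp (hconv.prodMk_nhds hconv)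
    simp only [Function.comp_def] at h
    rw [hx] at h
    refine h.congr fun n => ?_
    rw [mul_inv]
    simp [LinearMap.map_smul, smul_eq_mul, hnorm n]
    rfl
  have h2 : Tendsto (fun n => (f n) * (f n)) atTop atTop := by
    have h1' : Tendsto (fun n => ((f n) * (f n))⁻¹) atTop (nhdsWithin 0 (Set.Ioi 0)) :=
      tendsto_nhdsWithin_of_tendsto_nhds_of_eventually_within _ h1
        (Eventually.of_forall fun n => Set.mem_Ioi.mpr (inv_pos.mpr (mul_pos (hfpos n) (hfpos n))))
    have := h1'.inv_tendsto_nhdsGT_zero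
    refine this.congr fun n => ?_
    simp
  have hftop : Tendsto f atTop atTop := by
    rw [tendsto_atTop]
    intro C
    filter_upwards [h2.eventually_ge_atTop (max C 0 * max C 0)] with n hn
    have hM : (0:ℝ) ≤ max C 0 := le_max_right _ _
    have : max C 0 ≤ f n := by nlinarith [hfpos n]
    exact le_trans (le_max_left C 0) this
  -- step 2 : c n / f n → B z x
  have hc : Tendsto (fun n => (f n)⁻¹ * c n) atTop (nhds (B z x)) := by
    have hcont : Continuous fun v : V => B z v :=
      (B z).continuous_of_finiteDimensional
    have h := (hcont.tendsto x).comp hconv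
    simp only [Function.comp_def] at h
    convert h using 2 with n
    simp [LinearMap.map_smul, smul_eq_mul]
    rfl
  -- step 3 : c n * f n → atBot
  have hcf : Tendsto (fun n => c n * f n) atTop atBot := by
    have h := Filter.Tendsto.neg_mul_atTop hzx hc h2
    refine h.congr fun n => ?_
    have hfn := hfne n
    field_simp
  -- step 4 : g n := φ (s n) = 1 - 2 * (c n * f n)
  have hgval : ∀ n, φ (z - (2 * c n) • α n) = 1 - 2 * (c n * f n) := by
    intro n
    simp [map_sub, LinearMap.map_smul, hz, smul_eq_mul, hfdef]
    ring
  set g : ℕ → ℝ := fun n => φ (z - (2 * c n) • α n) with hgdef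
  have hg : Tendsto g atTop atTop := by
    have h2cf : Tendsto (fun n => (-2 : ℝ) * (c n * f n)) atTop atTop :=
      hcf.const_mul_atBot_of_neg (by norm_num)
    have : Tendsto (fun n => 1 + (-2 : ℝ) * (c n * f n)) atTop atTop :=
      tendsto_atTop_add_const_left atTop 1 h2cf
    refine this.congr fun n => ?_
    rw [show g n = φ (z - (2 * c n) • α n) from rfl, hgval n]; ring
  refine ⟨hg, ?_⟩
  -- step 5 : the renormalized vector converges
  have hginv : Tendsto (fun n => (g n)⁻¹) atTop (nhds 0) := by
    exact hg.inv_tendsto_atTop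
  have hterm1 : Tendsto (fun n => (g n)⁻¹ • z) atTop (nhds ((0:ℝ) • z)) :=
    hginv.smul_const z
  have hcoef : Tendsto (fun n => 1 - (g n)⁻¹) atTop (nhds 1) := by
    simpa using (tendsto_const_nhds (x := (1:ℝ)) (f := atTop)).sub hginv
  have hterm2 : Tendsto (fun n => (1 - (g n)⁻¹) • ((f n)⁻¹ • α n)) atTop
      (nhds ((1:ℝ) • x)) := hcoef.smul hconv
  have hsum := hterm1.add hterm2
  rw [zero_smul, one_smul, zero_add] at hsum
  refine Tendsto.congr' ?_ hsum
  filter_upwards [hg.eventually_ge_atTop 1] with n hn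
  have hgne : g n ≠ 0 := by linarith
  have hkey : (1 - (g n)⁻¹) * (f n)⁻¹ = -((2 * c n) / g n) := by
    have hgn : g n = 1 - 2 * (c n * f n) := hgval n
    have hfn := hfne n
    field_simp
    nlinarith [hgn]
  calc (g n)⁻¹ • z + (1 - (g n)⁻¹) • ((f n)⁻¹ • α n)
      = (g n)⁻¹ • z + ((1 - (g n)⁻¹) * (f n)⁻¹) • α n := by rw [smul_smul]
    _ = (g n)⁻¹ • z - ((2 * c n) / g n) • α n := by rw [hkey]; module
    _ = (g n)⁻¹ • (z - (2 * c n) • α n) := by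
        rw [smul_sub, smul_smul]
        congr 1
        rw [div_eq_inv_mul]
end
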